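/- Let N ≥ 2, 1 ≤ k ≤ N − 1, and let F be a real number with k/N < F ≤ 1. Then the density matrix ρ_F on ℂ^N ⊗ ℂ^N does not belong to S_k; that is, in any decomposition ρ_F = Σ_i p_i |ψ_i⟩⟨ψ_i| into pure states, at least one ψ_i has Schmidt rank at least k + 1. -/

import Mathlib

open Matrix BigOperators
open scoped ComplexOrder

/-- The `n × n` matrix `M_ψ` associated to a vector `ψ ∈ ℂ^α ⊗ ℂ^β`,
with entries `(M_ψ)_{ij} = ⟨e_i ⊗ e_j, ψ⟩ = ψ (i, j)`. -/
def matOfVec {α β : Type*} (ψ : α × β → ℂ) : Matrix α β ℂ :=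
  Matrix.of fun i j => ψ (i, j)

/-- The Schmidt rank of a bipartite vector is the rank of its associated matrix. -/
noncomputable def schmidtRank {α β : Type*} [Fintype β] (ψ : α × β → ℂ) : ℕ :=
  (matOfVec ψ).rank

/-- `ψ` is a unit vector. -/
def IsUnitVec {γ : Type*} [Fintype γ] (ψ : γ → ℂ) : Prop :=
  ∑ x, Complex.normSq (ψ x) = 1

/-- The outer product `|ψ⟩⟨ψ|`. -/
def outer {γ : Type*} (ψ : γ → ℂ) : Matrix γ γ ℂ :=
  Matrix.of fun x y => ψ x * star (ψ y)

/-- `ρ ∈ S_k`: `ρ` admits a decomposition `ρ = ∑ i, p i • |ψ i⟩⟨ψ i|` with `p i ≥ 0`,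
`∑ i, p i = 1`, each `ψ i` a unit vector of Schmidt rank at most `k`. -/
def InSchmidtClass {α : Type*} [Fintype α] (k : ℕ)
    (ρ : Matrix (α × α) (α × α) ℂ) : Prop :=
  ∃ (m : ℕ) (p : Fin m → ℝ) (ψ : Fin m → α × α → ℂ),
    (∀ i, 0 ≤ p i) ∧ (∑ i, p i) = 1 ∧
    (∀ i, IsUnitVec (ψ i)) ∧ (∀ i, schmidtRank (ψ i) ≤ k) ∧
    ρ = ∑ i, (p i : ℂ) • outer (ψ i)

/-- The map `1 ⊗ Λ`, applying `Λ` to each block of a matrix indexed by `γ × Fin n`. -/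
def blockMap {γ : Type*} {n m : ℕ}
    (Λ : Matrix (Fin n) (Fin n) ℂ → Matrix (Fin m) (Fin m) ℂ)
    (X : Matrix (γ × Fin n) (γ × Fin n) ℂ) : Matrix (γ × Fin m) (γ × Fin m) ℂ :=
  Matrix.of fun a b => Λ (Matrix.of fun s t => X (a.1, s) (b.1, t)) a.2 b.2

/-- `Λ` is Hermiticity-preserving: `Λ(X†) = Λ(X)†`. -/
def HermPreserving {n m : ℕ}
    (Λ : Matrix (Fin n) (Fin n) ℂ → Matrix (Fin m) (Fin m) ℂ) : Prop :=
  ∀ X, Λ Xᴴ = (Λ X)ᴴ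

/-- `Λ` is `k`-positive: `(1 ⊗ Λ)(|ψ⟩⟨ψ|)` is positive semidefinite for every
unit vector `ψ ∈ ℂ^N ⊗ ℂ^N` of Schmidt rank at most `k`. -/
def kPositive {N : ℕ} (k : ℕ)
    (Λ : Matrix (Fin N) (Fin N) ℂ → Matrix (Fin N) (Fin N) ℂ) : Prop :=
  ∀ ψ : Fin N × Fin N → ℂ, IsUnitVec ψ → schmidtRank ψ ≤ k →
    (blockMap Λ (outer ψ)).PosSemidef

/-- The maximally entangled state `Ψ⁺ = (1/√N) ∑ i, e i ⊗ e i`. -/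
noncomputable def psiPlus (N : ℕ) : Fin N × Fin N → ℂ :=
  fun x => if x.1 = x.2 then ((Real.sqrt N : ℂ))⁻¹ else 0

/-- The isotropic state `ρ_F = F |Ψ⁺⟩⟨Ψ⁺| + ((1−F)/(N²−1)) (I − |Ψ⁺⟩⟨Ψ⁺|)`. -/
noncomputable def rhoF (N : ℕ) (F : ℝ) : Matrix (Fin N × Fin N) (Fin N × Fin N) ℂ :=
  (F : ℂ) • outer (psiPlus N) +
    (((1 - F) / ((N : ℝ) ^ 2 - 1) : ℝ) : ℂ) •
      ((1 : Matrix (Fin N × Fin N) (Fin N × Fin N) ℂ) - outer (psiPlus N))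

section Aux
open scoped InnerProductSpace ComplexConjugate

lemma cs_sum {ι : Type*} [Fintype ι] (a b : ι → ℂ) :
    Complex.normSq (∑ i, a i * b i) ≤ (∑ i, Complex.normSq (a i)) * (∑ i, Complex.normSq (b i)) := by
  let x : EuclideanSpace ℂ ι := (WithLp.equiv 2 _).symm (fun i => conj (a i))
  let y : EuclideanSpace ℂ ι := (WithLp.equiv 2 _).symm b
  have h := norm_inner_le_norm (𝕜 := ℂ) x y
  have hinner : ⟪x, y⟫_ℂ = ∑ i, a i * b i := by
    simp [PiLp.inner_apply, x, y, RCLike.inner_apply]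
    exact Finset.sum_congr rfl fun i _ => mul_comm _ _
  have hx : ‖x‖ ^ 2 = ∑ i, Complex.normSq (a i) := by
    rw [EuclideanSpace.norm_eq, Real.sq_sqrt (by positivity)]
    simp [x, Complex.sq_norm]
  have hy : ‖y‖ ^ 2 = ∑ i, Complex.normSq (b i) := by
    rw [EuclideanSpace.norm_eq, Real.sq_sqrt (by positivity)]
    simp [y, Complex.sq_norm]
  calc Complex.normSq (∑ i, a i * b i) = ‖⟪x, y⟫_ℂ‖ ^ 2 := by
        rw [hinner, ← Complex.sq_norm]
      _ ≤ (‖x‖ * ‖y‖) ^ 2 := by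
        apply pow_le_pow_left₀ (norm_nonneg _) h
      _ = _ := by rw [mul_pow, hx, hy]

lemma normSq_trace_le_aux {N r : ℕ} (M : Matrix (Fin N) (Fin N) ℂ)
    (W : Submodule ℂ (EuclideanSpace ℂ (Fin N)))
    (b : OrthonormalBasis (Fin r) ℂ W)
    (cW : Fin N → W)
    (hcval : ∀ i j, ((cW j : EuclideanSpace ℂ (Fin N)) i) = M i j) :
    Complex.normSq M.trace ≤ r * ∑ i, ∑ j, Complex.normSq (M i j) := by
  let ip : Inner ℂ W := InnerProductSpace.toInner
  let B : Fin r → Fin N → ℂ := fun s j => @inner ℂ W ip (b s) (cW j)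
  have hexp : ∀ i j, M i j = ∑ s : Fin r, B s j * ((b s : EuclideanSpace ℂ (Fin N)) i) := by
    intro i j
    have hrep := b.sum_repr' (cW j)
    have h2 := congrArg (fun (v : W) => (v : EuclideanSpace ℂ (Fin N)) i) hrep
    simp only [Submodule.coe_sum, Submodule.coe_smul] at h2
    rw [← hcval i j, ← h2]
    rw [WithLp.ofLp_sum, Finset.sum_apply]
    exact Finset.sum_congr rfl fun s _ => rfl
  have htr : M.trace = ∑ p : Fin N × Fin r,
      ((b p.2 : EuclideanSpace ℂ (Fin N)) p.1) * B p.2 p.1 := by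
    rw [Fintype.sum_prod_type]
    simp only [Matrix.trace, Matrix.diag]
    refine Finset.sum_congr rfl fun i _ => ?_
    rw [hexp i i]
    exact Finset.sum_congr rfl fun s _ => mul_comm _ _
  have hcs := cs_sum (fun p : Fin N × Fin r => ((b p.2 : EuclideanSpace ℂ (Fin N)) p.1))
      (fun p => B p.2 p.1)
  rw [← htr] at hcs
  have hA : (∑ p : Fin N × Fin r, Complex.normSq ((b p.2 : EuclideanSpace ℂ (Fin N)) p.1)) = r := by
    rw [Fintype.sum_prod_type_right]
    have h1 : ∀ s : Fin r, (∑ i, Complex.normSq ((b s : EuclideanSpace ℂ (Fin N)) i)) = 1 := by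
      intro s
      have hn : ‖(b s : EuclideanSpace ℂ (Fin N))‖ = 1 := by
        rw [Submodule.norm_coe]
        exact b.orthonormal.1 s
      have heq := EuclideanSpace.norm_eq (𝕜 := ℂ) (b s : EuclideanSpace ℂ (Fin N))
      rw [hn] at heq
      have h2 : (∑ i, ‖(b s : EuclideanSpace ℂ (Fin N)) i‖ ^ 2) = 1 := by
        rw [← Real.sq_sqrt (Finset.sum_nonneg (fun i _ => sq_nonneg ‖(b s : EuclideanSpace ℂ (Fin N)) i‖) : (0:ℝ) ≤ ∑ i, ‖(b s : EuclideanSpace ℂ (Fin N)) i‖ ^ 2), ← heq, one_pow]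
      rw [← h2]
      exact Finset.sum_congr rfl fun i _ => (Complex.sq_norm _).symm
    simp [h1]
  have hB : (∑ p : Fin N × Fin r, Complex.normSq (B p.2 p.1)) =
      ∑ i, ∑ j, Complex.normSq (M i j) := by
    rw [Fintype.sum_prod_type]
    conv_rhs => rw [Finset.sum_comm]
    refine Finset.sum_congr rfl fun j _ => ?_
    have hpar := b.sum_inner_mul_inner (cW j) (cW j)
    have hself : @inner ℂ W ip (cW j) (cW j) = ((∑ i, Complex.normSq (M i j) : ℝ) : ℂ) := by
      rw [show @inner ℂ W ip (cW j) (cW j)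
          = ⟪(cW j : EuclideanSpace ℂ (Fin N)), (cW j : EuclideanSpace ℂ (Fin N))⟫_ℂ from rfl,
        PiLp.inner_apply]
      push_cast
      refine Finset.sum_congr rfl fun i _ => ?_
      rw [RCLike.inner_apply, hcval, Complex.normSq_eq_conj_mul_self]
      ring
    have hterm : ∀ s, @inner ℂ W ip (cW j) (b s) * B s j = (Complex.normSq (B s j) : ℂ) := by
      intro s
      have hcj : @inner ℂ W ip (cW j) (b s) = conj (B s j) := by
        exact (inner_conj_symm (𝕜 := ℂ) (cW j) (b s)).symm
      rw [hcj, Complex.normSq_eq_conj_mul_self]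
    have h3 : (∑ s, (Complex.normSq (B s j) : ℂ)) = ((∑ i, Complex.normSq (M i j) : ℝ) : ℂ) := by
      rw [← hself, ← hpar]
      exact Finset.sum_congr rfl fun s _ => (hterm s).symm
    push_cast at h3
    exact_mod_cast h3
  rw [hA, hB] at hcs
  exact hcs

lemma normSq_trace_le {N : ℕ} (M : Matrix (Fin N) (Fin N) ℂ) :
    Complex.normSq M.trace ≤ M.rank * ∑ i, ∑ j, Complex.normSq (M i j) := by
  classical
  let c : Fin N → EuclideanSpace ℂ (Fin N) := fun j => (WithLp.equiv 2 (Fin N → ℂ)).symm (Mᵀ j)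
  let W : Submodule ℂ (EuclideanSpace ℂ (Fin N)) := Submodule.span ℂ (Set.range c)
  have hdim : Module.finrank ℂ W = M.rank := by
    rw [Matrix.rank_eq_finrank_span_cols]
    have : W = Submodule.map ((WithLp.linearEquiv 2 ℂ (Fin N → ℂ)).symm :
        (Fin N → ℂ) →ₗ[ℂ] EuclideanSpace ℂ (Fin N)) (Submodule.span ℂ (Set.range M.col)) := by
      rw [Submodule.map_span, ← Set.range_comp]; rfl
    rw [this, LinearEquiv.finrank_map_eq]
  have hmem : ∀ j, c j ∈ W := fun j => Submodule.subset_span ⟨j, rfl⟩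
  have := normSq_trace_le_aux M W (stdOrthonormalBasis ℂ W)
    (fun j => ⟨c j, hmem j⟩) (fun i j => rfl)
  rwa [hdim] at this

noncomputable def gmap {γ : Type*} [Fintype γ] (Φ : γ → ℂ) :
    Matrix γ γ ℂ →ₗ[ℂ] ℂ where
  toFun ρ := ∑ x, ∑ y, star (Φ x) * ρ x y * Φ y
  map_add' A B := by
    simp only [Matrix.add_apply, ← Finset.sum_add_distrib]
    exact Finset.sum_congr rfl fun x _ => Finset.sum_congr rfl fun y _ => by ring
  map_smul' c A := by
    simp only [Matrix.smul_apply, smul_eq_mul, RingHom.id_apply, Finset.mul_sum]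
    exact Finset.sum_congr rfl fun x _ => Finset.sum_congr rfl fun y _ => by ring

lemma gmap_outer {γ : Type*} [Fintype γ] (Φ ψ : γ → ℂ) :
    gmap Φ (outer ψ) = (Complex.normSq (∑ x, star (Φ x) * ψ x) : ℂ) := by
  have h1 : gmap Φ (outer ψ) = (∑ x, star (Φ x) * ψ x) * star (∑ x, star (Φ x) * ψ x) := by
    rw [star_sum, Finset.sum_mul_sum]
    simp only [gmap, LinearMap.coe_mk, AddHom.coe_mk, outer, Matrix.of_apply]
    exact Finset.sum_congr rfl fun x _ => Finset.sum_congr rfl fun y _ => by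
      simp only [star_mul', star_star]; ring
  rw [h1, Complex.star_def, Complex.mul_conj]

lemma gmap_one {γ : Type*} [Fintype γ] [DecidableEq γ] (Φ : γ → ℂ) :
    gmap Φ (1 : Matrix γ γ ℂ) = (∑ x, Complex.normSq (Φ x) : ℝ) := by
  simp only [gmap, LinearMap.coe_mk, AddHom.coe_mk, Matrix.one_apply, mul_ite, ite_mul,
    mul_one, mul_zero, zero_mul, Finset.sum_ite_eq, Finset.mem_univ, if_true]
  push_cast
  exact Finset.sum_congr rfl fun x _ => by
    rw [Complex.star_def, ← Complex.normSq_eq_conj_mul_self]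

lemma psiPlus_normSq_sum {N : ℕ} (hN : 2 ≤ N) :
    ∑ x : Fin N × Fin N, Complex.normSq (psiPlus N x) = 1 := by
  have hN0 : (0:ℝ) < N := by positivity
  rw [Fintype.sum_prod_type]
  have : ∀ i : Fin N, (∑ j, Complex.normSq (psiPlus N (i, j))) = (N : ℝ)⁻¹ := by
    intro i
    rw [show (∑ j, Complex.normSq (psiPlus N (i, j)))
        = ∑ j, if i = j then Complex.normSq (((Real.sqrt N : ℂ))⁻¹) else 0 from
      Finset.sum_congr rfl fun j _ => by by_cases h : i = j <;> simp [psiPlus, h]]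
    rw [Finset.sum_ite_eq, if_pos (Finset.mem_univ i)]
    rw [← Complex.ofReal_inv, Complex.normSq_ofReal]
    rw [← Real.sqrt_inv, Real.mul_self_sqrt (by positivity)]
  simp only [this, Finset.sum_const, Finset.card_univ, Fintype.card_fin, nsmul_eq_mul]
  field_simp

lemma star_psiPlus {N : ℕ} (x : Fin N × Fin N) : star (psiPlus N x) = psiPlus N x := by
  unfold psiPlus
  by_cases h : x.1 = x.2 <;> simp [h, ← Complex.ofReal_inv, Complex.conj_ofReal]

/-- overlap with psiPlus as trace -/
lemma overlap_eq {N : ℕ} (ψ : Fin N × Fin N → ℂ) :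
    (∑ x, star (psiPlus N x) * ψ x)
      = ((Real.sqrt N : ℂ))⁻¹ * (matOfVec ψ).trace := by
  simp only [star_psiPlus]
  rw [Fintype.sum_prod_type]
  have : ∀ i : Fin N, (∑ j, psiPlus N (i, j) * ψ (i, j))
      = ((Real.sqrt N : ℂ))⁻¹ * ψ (i, i) := by
    intro i
    rw [show (∑ j, psiPlus N (i, j) * ψ (i, j))
        = ∑ j, if i = j then ((Real.sqrt N : ℂ))⁻¹ * ψ (i, j) else 0 from
      Finset.sum_congr rfl fun j _ => by by_cases h : i = j <;> simp [psiPlus, h]]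
    rw [Finset.sum_ite_eq, if_pos (Finset.mem_univ i)]
  rw [Finset.sum_congr rfl fun i _ => this i, ← Finset.mul_sum]
  congr 1

lemma overlap_bound {N k : ℕ} (hN : 2 ≤ N) (ψ : Fin N × Fin N → ℂ)
    (hu : IsUnitVec ψ) (hr : schmidtRank ψ ≤ k) :
    Complex.normSq (∑ x, star (psiPlus N x) * ψ x) ≤ (k : ℝ) / N := by
  have hN0 : (0:ℝ) < N := by positivity
  rw [overlap_eq, Complex.normSq_mul]
  have h1 : Complex.normSq (((Real.sqrt N : ℂ))⁻¹) = (N : ℝ)⁻¹ := by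
    rw [← Complex.ofReal_inv, Complex.normSq_ofReal, ← Real.sqrt_inv,
      Real.mul_self_sqrt (by positivity)]
  have hfrob : (∑ i, ∑ j, Complex.normSq (matOfVec ψ i j)) = 1 := by
    rw [← hu, Fintype.sum_prod_type]; rfl
  have h2 := normSq_trace_le (matOfVec ψ)
  rw [hfrob, mul_one] at h2
  have h3 : Complex.normSq (matOfVec ψ).trace ≤ (k : ℝ) :=
    h2.trans (by exact_mod_cast Nat.cast_le.mpr hr)
  rw [h1, div_eq_inv_mul]
  exact mul_le_mul_of_nonneg_left h3 (by positivity)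

end Aux

/-- For `N ≥ 2`, `1 ≤ k ≤ N − 1` and `k/N < F ≤ 1`, the isotropic state
`ρ_F` does not belong to `S_k`. -/
theorem rhoF_not_in_schmidt_class {N k : ℕ} (hN : 2 ≤ N) (hk : 1 ≤ k) (hkN : k + 1 ≤ N)
    (F : ℝ) (hF1 : (k : ℝ) / N < F) (hF2 : F ≤ 1) :
    ¬ InSchmidtClass k (rhoF N F) := by
  rintro ⟨m, p, ψ, hp0, hp1, hunit, hrank, heq⟩
  set Φ := psiPlus N with hΦ
  have hΦsum := psiPlus_normSq_sum hN
  have hgP : gmap Φ (outer Φ) = 1 := by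
    rw [gmap_outer]
    have : (∑ x, star (Φ x) * Φ x) = ((∑ x, Complex.normSq (Φ x) : ℝ) : ℂ) := by
      push_cast
      exact Finset.sum_congr rfl fun x _ => by
        rw [Complex.star_def, ← Complex.normSq_eq_conj_mul_self]
    rw [this, hΦsum]
    norm_num
  have hg1 : gmap Φ (1 : Matrix (Fin N × Fin N) (Fin N × Fin N) ℂ) = 1 := by
    rw [gmap_one, hΦsum]; norm_num
  have hgRho : gmap Φ (rhoF N F) = (F : ℂ) := by
    rw [rhoF, map_add, _root_.map_smul, _root_.map_smul, map_sub, hg1, hgP]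
    simp
  have hgRho2 : gmap Φ (rhoF N F)
      = ∑ i, (p i : ℂ) * (Complex.normSq (∑ x, star (Φ x) * ψ i x) : ℂ) := by
    rw [heq, map_sum]
    exact Finset.sum_congr rfl fun i _ => by rw [_root_.map_smul, gmap_outer]; simp
  have hreal : F = ∑ i, p i * Complex.normSq (∑ x, star (Φ x) * ψ i x) := by
    have := hgRho.symm.trans hgRho2
    exact_mod_cast this
  have hbound : ∀ i, p i * Complex.normSq (∑ x, star (Φ x) * ψ i x) ≤ p i * ((k:ℝ)/N) :=
    fun i => mul_le_mul_of_nonneg_left (overlap_bound hN (ψ i) (hunit i) (hrank i)) (hp0 i)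
  have : F ≤ (k:ℝ)/N := by
    rw [hreal]
    calc ∑ i, p i * Complex.normSq (∑ x, star (Φ x) * ψ i x)
        ≤ ∑ i, p i * ((k:ℝ)/N) := Finset.sum_le_sum fun i _ => hbound i
      _ = (k:ℝ)/N := by rw [← Finset.sum_mul, hp1, one_mul]
  linarith
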